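/- Let B, C be real numbers with |B| ≤ C and C − B > 0, and set F(y) = By + C. There exists a constant c > 0 depending only on B, C such that for every C² function σ : [-1,1] → ℂ and every y ∈ (-1,1), one has |σ'(y) − σ'(-1)|² ≤ c·(1 + |log(1−y)|)·∫₋₁¹F(t)|σ''(t)|²dt. -/

import Mathlib

open MeasureTheory intervalIntegral


lemma cs_aux {a b : ℝ} (hab : a ≤ b) {h p q : ℝ → ℝ}
    (hh : IntervalIntegrable h volume a b) (hp : IntervalIntegrable p volume a b)
    (hq : IntervalIntegrable q volume a b)
    (hh0 : ∀ t ∈ Set.Icc a b, 0 ≤ h t) (hp0 : ∀ t ∈ Set.Icc a b, 0 ≤ p t)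
    (hq0 : ∀ t ∈ Set.Icc a b, 0 ≤ q t)
    (hpq : ∀ t ∈ Set.Icc a b, h t ^ 2 ≤ p t * q t) :
    (∫ t in a..b, h t) ^ 2 ≤ (∫ t in a..b, p t) * (∫ t in a..b, q t) := by
  set H := ∫ t in a..b, h t with hH
  set P := ∫ t in a..b, p t with hP
  set Q := ∫ t in a..b, q t with hQ
  have hH0 : 0 ≤ H := intervalIntegral.integral_nonneg hab hh0
  have hP0 : 0 ≤ P := intervalIntegral.integral_nonneg hab hp0
  have hQ0 : 0 ≤ Q := intervalIntegral.integral_nonneg hab hq0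
  have step : ∀ l : ℝ, 0 < l → 2 * l * H ≤ l ^ 2 * P + Q := by
    intro l hl
    have mono := intervalIntegral.integral_mono_on hab (hh.const_mul (2 * l))
      ((hp.const_mul (l ^ 2)).add hq)
      (fun t ht => by
        have hsq : (2 * l * h t) ^ 2 ≤ (l ^ 2 * p t + q t) ^ 2 := by
          nlinarith [sq_nonneg (l ^ 2 * p t - q t),
            mul_nonneg (sq_nonneg l) (sub_nonneg.mpr (hpq t ht))]
        exact (pow_le_pow_iff_left₀
          (by have := hh0 t ht; positivity)
          (by have := hp0 t ht; have := hq0 t ht; positivity) two_ne_zero).mp hsq)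
    rw [intervalIntegral.integral_const_mul,
      intervalIntegral.integral_add (hp.const_mul (l ^ 2)) hq,
      intervalIntegral.integral_const_mul] at mono
    exact mono
  have key : ∀ ε : ℝ, 0 < ε → H ^ 2 ≤ (P + ε) * (Q + ε) := by
    intro ε hε
    have hPε : 0 < P + ε := by linarith
    have hQε : 0 < Q + ε := by linarith
    set s := Real.sqrt (P + ε) with hs
    set r := Real.sqrt (Q + ε) with hr
    have hs0 : 0 < s := Real.sqrt_pos.mpr hPε
    have hr0 : 0 < r := Real.sqrt_pos.mpr hQε
    have hs2 : s ^ 2 = P + ε := Real.sq_sqrt hPε.le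
    have hr2 : r ^ 2 = Q + ε := Real.sq_sqrt hQε.le
    have hl : 0 < r / s := div_pos hr0 hs0
    have h4 : 2 * (r / s) * H ≤ 2 * r ^ 2 := by
      have e : (r / s) ^ 2 * (P + ε) + (Q + ε) = 2 * r ^ 2 := by
        rw [← hs2, ← hr2]; field_simp; ring
      have h5 : (r / s) ^ 2 * P + Q ≤ 2 * r ^ 2 := by nlinarith [sq_nonneg (r / s)]
      linarith [step (r / s) hl]
    have hHrs : H ≤ r * s := by
      have h5 : s * (2 * (r / s) * H) ≤ s * (2 * r ^ 2) :=
        mul_le_mul_of_nonneg_left h4 hs0.le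
      have e2 : s * (2 * (r / s) * H) = 2 * r * H := by field_simp
      have e3 : s * (2 * r ^ 2) = 2 * r * (r * s) := by ring
      rw [e2, e3] at h5
      exact le_of_mul_le_mul_left h5 (by positivity)
    calc H ^ 2 ≤ (r * s) ^ 2 := by exact pow_le_pow_left₀ hH0 hHrs 2
      _ = (P + ε) * (Q + ε) := by rw [mul_pow, hr2, hs2]; ring
  have lim : Filter.Tendsto (fun ε : ℝ => (P + ε) * (Q + ε)) (nhdsWithin 0 (Set.Ioi 0)) (nhds (P * Q)) := by
    have : Filter.Tendsto (fun ε : ℝ => (P + ε) * (Q + ε)) (nhds 0) (nhds ((P + 0) * (Q + 0))) :=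
      ((continuous_const.add continuous_id).mul (continuous_const.add continuous_id)).tendsto 0
    simpa using this.mono_left nhdsWithin_le_nhds
  exact ge_of_tendsto lim (Filter.eventually_iff_exists_mem.mpr
    ⟨Set.Ioi 0, self_mem_nhdsWithin, fun ε hε => key ε hε⟩)

/-- Pointwise logarithmic estimate (cf. \eqref{sigma-basic} in the paper): for the affine
weight `F(y) = By + C` with `|B| ≤ C` and `C − B > 0`, there is `c > 0` depending only on
`B, C` such that every `C²` function `σ` and every `y ∈ (-1,1)` satisfy
`|σ'(y) − σ'(-1)|² ≤ c·(1 + |log(1−y)|)·∫F|σ''|²`. -/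
theorem stmt_6 (B C : ℝ) (hBC : |B| ≤ C) (hCB : 0 < C - B) :
    ∃ c > 0, ∀ σ : ℝ → ℂ, ContDiff ℝ 2 σ → ∀ y ∈ Set.Ioo (-1 : ℝ) 1,
      ‖deriv σ y - deriv σ (-1)‖ ^ 2
        ≤ c * (1 + |Real.log (1 - y)|) *
            ∫ t in (-1 : ℝ)..1, (B * t + C) * ‖iteratedDeriv 2 σ t‖ ^ 2 := by
  refine ⟨2 / (C - B), by positivity, ?_⟩
  intro σ hσ y hy
  obtain ⟨hy1, hy2⟩ := hy
  have hy1' : (-1 : ℝ) ≤ y := hy1.le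
  set m : ℝ := (C - B) / 2 with hm
  have hm0 : 0 < m := by rw [hm]; linarith
  obtain ⟨hB1, hB2⟩ := abs_le.mp hBC
  have hFlow : ∀ t : ℝ, -1 ≤ t → m * (1 - t) ≤ B * t + C := by
    intro t ht; rw [hm]; nlinarith
  have hF0 : ∀ t ∈ Set.Icc (-1 : ℝ) y, 0 < B * t + C := by
    intro t ht
    have h1 : 0 < m * (1 - t) := by have := ht.2; nlinarith
    linarith [hFlow t ht.1]
  -- continuity of second derivative
  have hcont2 : Continuous (iteratedDeriv 2 σ) := hσ.continuous_iteratedDeriv 2 (le_refl _)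
  have hderiv2 : iteratedDeriv 2 σ = deriv (deriv σ) := by
    rw [iteratedDeriv_succ, iteratedDeriv_one]
  have hdiff : Differentiable ℝ (deriv σ) := by
    have h2 : ContDiff ℝ (1 + 1) σ := by
      have : ((1 : WithTop ℕ∞) + 1) = 2 := by norm_num
      rw [this]; exact hσ
    exact ((contDiff_succ_iff_deriv.mp h2).2.2).differentiable one_ne_zero
  -- FTC
  have hftc : ∫ t in (-1 : ℝ)..y, iteratedDeriv 2 σ t = deriv σ y - deriv σ (-1) := by
    rw [hderiv2]
    exact intervalIntegral.integral_deriv_eq_sub (fun x _ => hdiff x)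
      ((hderiv2 ▸ hcont2).intervalIntegrable _ _)
  have h1 : ‖deriv σ y - deriv σ (-1)‖ ≤ ∫ t in (-1 : ℝ)..y, ‖iteratedDeriv 2 σ t‖ := by
    rw [← hftc]
    exact intervalIntegral.norm_integral_le_integral_norm hy1'
  -- Cauchy-Schwarz
  have hpcont : ContinuousOn (fun t : ℝ => (B * t + C)⁻¹) (Set.uIcc (-1 : ℝ) y) := by
    rw [Set.uIcc_of_le hy1']
    exact ContinuousOn.inv₀ (by fun_prop) (fun t ht => (hF0 t ht).ne')
  have hcs := cs_aux (h := fun t => ‖iteratedDeriv 2 σ t‖)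
      (p := fun t => (B * t + C)⁻¹)
      (q := fun t => (B * t + C) * ‖iteratedDeriv 2 σ t‖ ^ 2) hy1'
    (hcont2.norm.intervalIntegrable _ _)
    hpcont.intervalIntegrable
    (((by fun_prop : Continuous fun t : ℝ => (B * t + C)).mul (hcont2.norm.pow 2)).intervalIntegrable _ _)
    (fun t _ => norm_nonneg _)
    (fun t ht => (inv_nonneg).mpr (hF0 t ht).le)
    (fun t ht => mul_nonneg (hF0 t ht).le (by positivity))
    (fun t ht => by
      rw [← mul_assoc, inv_mul_cancel₀ (hF0 t ht).ne', one_mul])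
  -- bound the weight integral P
  have hlogint : ∫ t in (-1 : ℝ)..y, (1 - t)⁻¹ = Real.log 2 - Real.log (1 - y) := by
    have hd : ∀ t ∈ Set.uIcc (-1 : ℝ) y, HasDerivAt (fun s => -Real.log (1 - s)) (1 - t)⁻¹ t := by
      intro t ht
      rw [Set.uIcc_of_le hy1'] at ht
      have hne : (1 : ℝ) - t ≠ 0 := by have := ht.2; nlinarith [hy2]
      have h := ((Real.hasDerivAt_log hne).comp t (((hasDerivAt_id t).const_sub 1))).neg
      exact h.congr_deriv (by ring)
    have hint : IntervalIntegrable (fun t : ℝ => (1 - t)⁻¹) volume (-1) y := by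
      apply ContinuousOn.intervalIntegrable
      apply ContinuousOn.inv₀ (by fun_prop)
      intro t ht
      rw [Set.uIcc_of_le hy1'] at ht
      have := ht.2; nlinarith [hy2]
    rw [intervalIntegral.integral_eq_sub_of_hasDerivAt hd hint]
    norm_num
    ring
  have hP : ∫ t in (-1 : ℝ)..y, (B * t + C)⁻¹ ≤ m⁻¹ * (1 + |Real.log (1 - y)|) := by
    have hmono : ∫ t in (-1 : ℝ)..y, (B * t + C)⁻¹ ≤ ∫ t in (-1 : ℝ)..y, (m * (1 - t))⁻¹ := by
      apply intervalIntegral.integral_mono_on hy1'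
        hpcont.intervalIntegrable
      · apply ContinuousOn.intervalIntegrable
        apply ContinuousOn.inv₀ (by fun_prop)
        intro t ht
        rw [Set.uIcc_of_le hy1'] at ht
        have := ht.2; nlinarith [hy2]
      · intro t ht
        have hpos : 0 < m * (1 - t) := by have := ht.2; nlinarith [hy2]
        exact inv_anti₀ hpos (hFlow t ht.1)
    have heq : ∫ t in (-1 : ℝ)..y, (m * (1 - t))⁻¹
        = m⁻¹ * (Real.log 2 - Real.log (1 - y)) := by
      simp_rw [mul_inv]
      rw [intervalIntegral.integral_const_mul, hlogint]
    have hlog2 : Real.log 2 ≤ 1 := by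
      have := Real.log_le_sub_one_of_pos (by norm_num : (0:ℝ) < 2); linarith
    have habs : -Real.log (1 - y) ≤ |Real.log (1 - y)| := neg_le_abs _
    have : m⁻¹ * (Real.log 2 - Real.log (1 - y)) ≤ m⁻¹ * (1 + |Real.log (1 - y)|) := by
      apply mul_le_mul_of_nonneg_left _ (by positivity)
      linarith
    linarith [hmono, heq ▸ hmono]
  -- extend Q to the full interval
  have hq1 : IntervalIntegrable (fun t : ℝ => (B * t + C) * ‖iteratedDeriv 2 σ t‖ ^ 2) volume (-1) y :=
    (((by fun_prop : Continuous fun t : ℝ => (B * t + C)).mul (hcont2.norm.pow 2)).intervalIntegrable _ _)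
  have hq2 : IntervalIntegrable (fun t : ℝ => (B * t + C) * ‖iteratedDeriv 2 σ t‖ ^ 2) volume y 1 :=
    (((by fun_prop : Continuous fun t : ℝ => (B * t + C)).mul (hcont2.norm.pow 2)).intervalIntegrable _ _)
  have hQfull : ∫ t in (-1 : ℝ)..y, (B * t + C) * ‖iteratedDeriv 2 σ t‖ ^ 2
      ≤ ∫ t in (-1 : ℝ)..1, (B * t + C) * ‖iteratedDeriv 2 σ t‖ ^ 2 := by
    rw [← intervalIntegral.integral_add_adjacent_intervals hq1 hq2]
    have hnn : 0 ≤ ∫ t in y..1, (B * t + C) * ‖iteratedDeriv 2 σ t‖ ^ 2 := by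
      apply intervalIntegral.integral_nonneg hy2.le
      intro t ht
      have hF : 0 ≤ B * t + C := by
        have h2 := hFlow t (by linarith [ht.1])
        have := ht.2; nlinarith
      positivity
    linarith
  have hQ0 : 0 ≤ ∫ t in (-1 : ℝ)..y, (B * t + C) * ‖iteratedDeriv 2 σ t‖ ^ 2 := by
    apply intervalIntegral.integral_nonneg hy1'
    intro t ht
    exact mul_nonneg (hF0 t ht).le (by positivity)
  have hminv : m⁻¹ = 2 / (C - B) := by rw [hm, inv_div]
  calc ‖deriv σ y - deriv σ (-1)‖ ^ 2
      ≤ (∫ t in (-1 : ℝ)..y, ‖iteratedDeriv 2 σ t‖) ^ 2 :=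
        pow_le_pow_left₀ (norm_nonneg _) h1 2
    _ ≤ (∫ t in (-1 : ℝ)..y, (B * t + C)⁻¹)
        * ∫ t in (-1 : ℝ)..y, (B * t + C) * ‖iteratedDeriv 2 σ t‖ ^ 2 := hcs
    _ ≤ (m⁻¹ * (1 + |Real.log (1 - y)|))
        * ∫ t in (-1 : ℝ)..1, (B * t + C) * ‖iteratedDeriv 2 σ t‖ ^ 2 :=
        mul_le_mul hP hQfull hQ0 (by positivity)
    _ = 2 / (C - B) * (1 + |Real.log (1 - y)|)
        * ∫ t in (-1 : ℝ)..1, (B * t + C) * ‖iteratedDeriv 2 σ t‖ ^ 2 := by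
        rw [hminv]
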